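/- Assume the localization map φ̇: V → V_x is surjective. Then φ̇ admits a k[x]-module section if and only if φ = φ₁ + φ₂ for endomorphisms φ₁, φ₂ of V such that i(φ₁) ≤ 1 (i.e. V = Ker(φ₁) ⊕ Im(φ₁) with φ₁ restricting to an injection on Im(φ₁)), φ₂ is pointwise nilpotent (every vector is killed by some power of φ₂), and φ₁ ∘ φ₂ = 0 = φ₂ ∘ φ₁. -/

import Mathlib

open Polynomial

theorem stmt_9 (k : Type*) [Field k] (V : Type*) [AddCommGroup V] [Module k V]
    [Module (Polynomial k) V] [IsScalarTower k (Polynomial k) V]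
    (φ : V →ₗ[k] V) (hφ : ∀ v : V, (X : Polynomial k) • v = φ v)
    (hsurj : Function.Surjective
      (LocalizedModule.mkLinearMap (Submonoid.powers (X : Polynomial k)) V)) :
    (∃ σ : LocalizedModule (Submonoid.powers (X : Polynomial k)) V →ₗ[Polynomial k] V,
      (LocalizedModule.mkLinearMap (Submonoid.powers (X : Polynomial k)) V) ∘ₗ σ
        = LinearMap.id)
    ↔ ∃ φ₁ φ₂ : V →ₗ[k] V, φ = φ₁ + φ₂ ∧
        (LinearMap.ker φ₁ = LinearMap.ker (φ₁ ^ 2) ∧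
          LinearMap.range φ₁ = LinearMap.range (φ₁ ^ 2)) ∧
        (∀ v : V, ∃ n : ℕ, (φ₂ ^ n) v = 0) ∧
        (φ₁ ∘ₗ φ₂ = 0 ∧ φ₂ ∘ₗ φ₁ = 0) := by
  classical
  set R := Polynomial k
  set S := Submonoid.powers (X : R) with hS
  set f := LocalizedModule.mkLinearMap S V with hf
  have hXS : (X : R) ∈ S := Submonoid.mem_powers _
  -- X^n acts as φ^n
  have hXpow : ∀ (n : ℕ) (v : V), ((X : R) ^ n) • v = (φ ^ n) v := by
    intro n
    induction n with
    | zero => intro v; simp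
    | succ n ih =>
      intro v
      rw [pow_succ, mul_smul, hφ, pow_succ, Module.End.mul_apply]
      · exact ih (φ v) ▸ congrArg _ rfl
  have hXpow' : ∀ (n : ℕ) (v : V), ((X : R) ^ n) • v = (φ ^ n) v := hXpow
  -- kernel of f characterization
  have hker0 : ∀ v : V, f v = 0 ↔ ∃ n : ℕ, ((X : R) ^ n) • v = 0 := by
    intro v
    constructor
    · intro h
      have h' : LocalizedModule.mk v (1 : S) = LocalizedModule.mk (0 : V) (1 : S) := by
        simpa [f, LocalizedModule.mkLinearMap, LocalizedModule.zero_mk] using h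
      obtain ⟨u, hu⟩ := LocalizedModule.mk_eq.mp h'
      obtain ⟨n, hn⟩ := u.2
      refine ⟨n, ?_⟩
      have h2 : (u : R) • v = 0 := by simpa [Submonoid.smul_def] using hu
      have hn' : (X : R) ^ n = (u : R) := hn
      rw [← hn'] at h2; exact h2
    · rintro ⟨n, hn⟩
      have : LocalizedModule.mk v (1 : S) = LocalizedModule.mk (0 : V) (1 : S) := by
        refine LocalizedModule.mk_eq.mpr ⟨⟨X ^ n, ⟨n, rfl⟩⟩, ?_⟩
        simp [Submonoid.smul_def, hn]
      simpa [f, LocalizedModule.mkLinearMap, LocalizedModule.zero_mk] using this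
  constructor
  · -- forward direction: given a section σ
    rintro ⟨σ, hσ⟩
    have hfσ : ∀ u, f (σ u) = u := fun u => by
      have := LinearMap.ext_iff.mp hσ u
      simpa using this
    set W : Submodule R V := LinearMap.range σ with hW
    set T : Submodule R V := LinearMap.ker f with hT
    have hcompl : IsCompl W T := by
      constructor
      · rw [disjoint_iff_inf_le]
        rintro v ⟨⟨u, rfl⟩, hv2⟩
        have : f (σ u) = 0 := hv2
        rw [hfσ] at this
        simp [this]
      · rw [codisjoint_iff_le_sup]
        intro v _
        refine Submodule.mem_sup.mpr ⟨σ (f v), ⟨f v, rfl⟩, v - σ (f v), ?_, by abel⟩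
        show f (v - σ (f v)) = 0
        rw [map_sub, hfσ, sub_self]
    set p : V →ₗ[R] V := W.subtype ∘ₗ Submodule.projectionOnto W T hcompl with hp
    have hpmem : ∀ v, p v ∈ W := fun v => (Submodule.projectionOnto W T hcompl v).2
    have hpW : ∀ w ∈ W, p w = w := by
      intro w hw
      show (W.subtype) (Submodule.projectionOnto W T hcompl w) = w
      rw [show w = ((⟨w, hw⟩ : W) : V) from rfl,
        Submodule.projectionOnto_apply_left hcompl]
      rfl
    have hpT : ∀ t ∈ T, p t = 0 := by
      intro t ht
      show (W.subtype) (Submodule.projectionOnto W T hcompl t) = 0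
      rw [Submodule.projectionOnto_apply_of_mem_right hcompl ht]
      rfl
    have hsubT : ∀ v, v - p v ∈ T := by
      intro v
      have h := Submodule.projection_add_projection_eq_self hcompl v
      have : v - p v = (T.projectionOnto W hcompl.symm v : V) := by
        show v - W.projection T hcompl v = T.projection W hcompl.symm v
        nth_rewrite 1 [← h]; abel
      rw [this]
      exact (T.projectionOnto W hcompl.symm v).2
    -- X acts injectively on the localized module
    have hXinjx : ∀ u : LocalizedModule S V, (X : R) • u = 0 → u = 0 := by
      intro u hu
      have hunit := IsLocalizedModule.map_units f ⟨X, hXS⟩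
      have hbij := Module.End.isUnit_iff _ |>.mp hunit
      have : (algebraMap R (Module.End R (LocalizedModule S V))) (X : R) u = 0 := by
        rw [Module.algebraMap_end_apply]; exact hu
      have h0 : (algebraMap R (Module.End R (LocalizedModule S V))) (X : R) 0 = 0 := by simp
      exact hbij.1 (this.trans h0.symm)
    have hσinj : Function.Injective σ := by
      intro a b hab
      have := congrArg f hab
      rwa [hfσ, hfσ] at this
    -- X is injective on W
    have hXinjW : ∀ w ∈ W, (X : R) • w = 0 → w = 0 := by
      rintro w ⟨u, rfl⟩ hw
      have h1 : σ ((X : R) • u) = 0 := by rw [map_smul]; exact hw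
      have hu0 : (X : R) • u = 0 := hσinj (by simpa using h1)
      have hu1 : u = 0 := hXinjx u hu0
      rw [hu1, map_zero]
    -- X is surjective on W
    have hXsurjW : ∀ w ∈ W, ∃ w' ∈ W, (X : R) • w' = w := by
      rintro w ⟨u, rfl⟩
      -- u = X • u' for some u'
      have hunit := IsLocalizedModule.map_units f ⟨X, hXS⟩
      have hbij := Module.End.isUnit_iff _ |>.mp hunit
      obtain ⟨u', hu'⟩ := hbij.2 u
      refine ⟨σ u', ⟨u', rfl⟩, ?_⟩
      rw [← map_smul]
      exact congrArg σ hu'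
    set φ₁ : V →ₗ[k] V := φ ∘ₗ (p.restrictScalars k) with hφ₁
    refine ⟨φ₁, φ - φ₁, by abel, ⟨?_, ?_⟩, ?_, ?_, ?_⟩
    · -- ker φ₁ = ker φ₁²
      have h1 : ∀ v, φ₁ v = (X : R) • p v := fun v => by
        simp [φ₁, hφ]
      have h2 : ∀ v, (φ₁ ^ 2) v = (X : R) • ((X : R) • p v) := by
        intro v
        have : (φ₁ ^ 2) v = φ₁ (φ₁ v) := by rw [pow_two, Module.End.mul_apply]
        rw [this, h1, h1 v]
        congr 1
        have hmem : (X : R) • p v ∈ W := W.smul_mem _ (hpmem v)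
        rw [hpW _ hmem]
      ext v
      simp only [LinearMap.mem_ker]
      rw [h1, h2]
      constructor
      · intro h; rw [h]; simp
      · intro h
        have hx : (X : R) • p v ∈ W := W.smul_mem _ (hpmem v)
        exact hXinjW _ hx h
    · -- range φ₁ = range φ₁²
      have h1 : ∀ v, φ₁ v = (X : R) • p v := fun v => by simp [φ₁, hφ]
      have hr1 : ∀ w, w ∈ LinearMap.range φ₁ ↔ w ∈ W := by
        intro w
        constructor
        · rintro ⟨v, rfl⟩; rw [h1]; exact W.smul_mem _ (hpmem v)
        · intro hw
          obtain ⟨w', hw', hww⟩ := hXsurjW w hw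
          exact ⟨w', by rw [h1, hpW _ hw', hww]⟩
      have hr2 : ∀ w, w ∈ LinearMap.range (φ₁ ^ 2) ↔ w ∈ W := by
        intro w
        have h2 : ∀ v, (φ₁ ^ 2) v = φ₁ (φ₁ v) := fun v => by
          rw [pow_two, Module.End.mul_apply]
        constructor
        · rintro ⟨v, rfl⟩
          rw [h2, h1]
          exact W.smul_mem _ (hpmem _)
        · intro hw
          obtain ⟨w', hw', hww⟩ := hXsurjW w hw
          obtain ⟨w'', hw'', hww'⟩ := hXsurjW w' hw'
          refine ⟨w'', ?_⟩
          rw [h2, h1 w'', hpW _ hw'', hww', h1 w', hpW _ hw', hww]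
      ext w
      rw [hr1, hr2]
    · -- (φ - φ₁) locally nilpotent
      intro v
      set ψ := φ - φ₁ with hψ
      have hψap : ∀ u, ψ u = (X : R) • (u - p u) := by
        intro u
        simp only [ψ, LinearMap.sub_apply, φ₁, LinearMap.comp_apply,
          LinearMap.restrictScalars_apply]
        rw [smul_sub, hφ, hφ]
      have hψT : ∀ t ∈ T, ψ t = (X : R) • t := by
        intro t ht
        rw [hψap, hpT t ht, sub_zero]
      have hψTmem : ∀ t ∈ T, ψ t ∈ T := by
        intro t ht
        rw [hψT t ht]; exact T.smul_mem _ ht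
      have key : ∀ (n : ℕ) (t : V), t ∈ T → (ψ ^ n) t = ((X : R) ^ n) • t := by
        intro n
        induction n with
        | zero => intro t _; simp
        | succ n ih =>
          intro t ht
          rw [pow_succ, Module.End.mul_apply, ih (ψ t) (hψTmem t ht), hψT t ht,
            ← mul_smul, ← pow_succ]
      have ht0 : v - p v ∈ T := hsubT v
      obtain ⟨n, hn⟩ := (hker0 (v - p v)).mp ht0
      refine ⟨n + 1, ?_⟩
      have : (ψ ^ (n + 1)) v = (ψ ^ n) (ψ v) := by rw [pow_succ, Module.End.mul_apply]
      rw [this, hψap]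
      have hmem : (X : R) • (v - p v) ∈ T := T.smul_mem _ ht0
      rw [key n _ hmem, ← mul_smul, mul_comm, mul_smul, hn, smul_zero]
    · -- φ₁ ∘ (φ - φ₁) = 0
      ext v
      have hmem : (φ - φ₁) v ∈ T := by
        show f ((φ - φ₁) v) = 0
        have : (φ - φ₁) v = (X : R) • (v - p v) := by
          simp only [LinearMap.sub_apply, φ₁, LinearMap.comp_apply,
            LinearMap.restrictScalars_apply]
          rw [smul_sub, hφ, hφ]
        rw [this]
        exact T.smul_mem _ (hsubT v)
      simp only [LinearMap.comp_apply, LinearMap.zero_apply]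
      show φ (p ((φ - φ₁) v)) = 0
      rw [hpT _ hmem, map_zero]
    · -- (φ - φ₁) ∘ φ₁ = 0
      ext v
      simp only [LinearMap.comp_apply, LinearMap.zero_apply, LinearMap.sub_apply]
      have hmem : φ₁ v ∈ W := by
        have : φ₁ v = (X : R) • p v := by simp [φ₁, hφ]
        rw [this]; exact W.smul_mem _ (hpmem v)
      show φ (φ₁ v) - φ (p (φ₁ v)) = 0
      rw [hpW _ hmem, sub_self]
  · -- reverse direction
    rintro ⟨φ₁, φ₂, hsum, ⟨hker, hrange⟩, hnil, hc12, hc21⟩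
    have h12 : ∀ v, φ₁ (φ₂ v) = 0 := fun v => LinearMap.ext_iff.mp hc12 v
    have h21 : ∀ v, φ₂ (φ₁ v) = 0 := fun v => LinearMap.ext_iff.mp hc21 v
    have hφeq : ∀ v, φ v = φ₁ v + φ₂ v := fun v => by
      rw [hsum]; rfl
    -- disjointness of ker φ₁ and range φ₁
    have hkd : ∀ v, φ₁ v = 0 → v ∈ LinearMap.range φ₁ → v = 0 := by
      rintro v hv ⟨u, rfl⟩
      have : u ∈ LinearMap.ker (φ₁ ^ 2) := by
        rw [LinearMap.mem_ker, pow_two, Module.End.mul_apply]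
        exact hv
      rw [← hker, LinearMap.mem_ker] at this
      exact this
    -- φ₁ surjective on its range
    have hsurjW : ∀ w ∈ LinearMap.range φ₁, ∃ w' ∈ LinearMap.range φ₁, φ₁ w' = w := by
      intro w hw
      rw [hrange] at hw
      obtain ⟨u, hu⟩ := hw
      rw [pow_two, Module.End.mul_apply] at hu
      exact ⟨φ₁ u, ⟨u, rfl⟩, hu⟩
    -- X acts as φ₁ on range φ₁
    have hXW : ∀ w ∈ LinearMap.range φ₁, (X : R) • w = φ₁ w := by
      rintro w ⟨u, rfl⟩
      rw [hφ, hφeq, h21, add_zero]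
    have hWinv : ∀ w ∈ LinearMap.range φ₁, (X : R) • w ∈ LinearMap.range φ₁ := by
      intro w hw
      rw [hXW w hw]
      exact ⟨w, rfl⟩
    have hXnW : ∀ (n : ℕ), ∀ w ∈ LinearMap.range φ₁,
        ((X : R) ^ n) • w ∈ LinearMap.range φ₁ := by
      intro n
      induction n with
      | zero => intro w hw; simpa using hw
      | succ n ih =>
        intro w hw
        rw [pow_succ, mul_smul]
        exact ih _ (hWinv w hw)
    -- torsion elements are exactly ker φ₁
    have htors : ∀ t : V, φ₁ t = 0 → ∃ n : ℕ, ((X : R) ^ n) • t = 0 := by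
      intro t ht
      have key : ∀ (n : ℕ) (t : V), φ₁ t = 0 → ((X : R) ^ n) • t = (φ₂ ^ n) t := by
        intro n
        induction n with
        | zero => intro t _; simp
        | succ n ih =>
          intro t ht
          rw [pow_succ, mul_smul, hφ, hφeq, ht, zero_add, ih (φ₂ t) (h12 t)]
          rw [pow_succ, Module.End.mul_apply]
      obtain ⟨n, hn⟩ := hnil t
      exact ⟨n, by rw [key n t ht, hn]⟩
    -- decomposition V = ker φ₁ + range φ₁
    have hdecomp : ∀ v : V, ∃ t w : V, φ₁ t = 0 ∧ w ∈ LinearMap.range φ₁ ∧ v = t + w := by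
      intro v
      have : φ₁ v ∈ LinearMap.range (φ₁ ^ 2) := by rw [← hrange]; exact ⟨v, rfl⟩
      obtain ⟨u, hu⟩ := this
      rw [pow_two, Module.End.mul_apply] at hu
      refine ⟨v - φ₁ u, φ₁ u, ?_, ⟨u, rfl⟩, by abel⟩
      rw [map_sub, hu, sub_self]
    -- range φ₁ as an R-submodule
    have hXnmem : ∀ (n : ℕ), ∀ w ∈ LinearMap.range φ₁,
        ((X : R) ^ n) • w ∈ LinearMap.range φ₁ := hXnW
    set W : Submodule R V :=
      { carrier := (LinearMap.range φ₁ : Set V)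
        add_mem' := fun ha hb => Submodule.add_mem _ ha hb
        zero_mem' := Submodule.zero_mem _
        smul_mem' := by
          intro c v hv
          induction c using Polynomial.induction_on' with
          | add p q hp hq =>
            rw [add_smul]
            exact Submodule.add_mem _ hp hq
          | monomial n a =>
            rw [← C_mul_X_pow_eq_monomial, mul_smul]
            have h1 : ((X : R) ^ n) • v ∈ LinearMap.range φ₁ := hXnmem n v hv
            have : (C a : R) • (((X : R) ^ n) • v) = a • (((X : R) ^ n) • v) := by
              rw [← Polynomial.algebraMap_eq, algebraMap_smul]
            rw [this]
            exact Submodule.smul_mem _ _ h1 } with hWdef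
    have hWm : ∀ v : V, v ∈ W ↔ v ∈ LinearMap.range φ₁ := fun v => Iff.rfl
    -- the map e : W → localized module
    set e : W →ₗ[R] LocalizedModule S V := f ∘ₗ W.subtype with he
    have heinj : Function.Injective e := by
      rw [injective_iff_map_eq_zero]
      intro w hw
      have hw0 : f (w : V) = 0 := hw
      obtain ⟨n, hn⟩ := (hker0 (w : V)).mp hw0
      -- show by induction: X^n • w = 0 and w ∈ range φ₁ implies w = 0
      have key : ∀ (n : ℕ), ∀ v ∈ LinearMap.range φ₁, ((X : R) ^ n) • v = 0 → v = 0 := by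
        intro n
        induction n with
        | zero => intro v _ h0; simpa using h0
        | succ n ih =>
          intro v hv h0
          rw [pow_succ', mul_smul] at h0
          have hmem : ((X : R) ^ n) • v ∈ LinearMap.range φ₁ := hXnW n v hv
          rw [hXW _ hmem] at h0
          have : ((X : R) ^ n) • v = 0 := hkd _ h0 hmem
          exact ih v hv this
      have : (w : V) = 0 := key n (w : V) (w.2) hn
      exact Subtype.ext this
    have hesurj : Function.Surjective e := by
      intro u
      induction u using LocalizedModule.induction_on with
      | h m s =>
        obtain ⟨n, hsn⟩ := s.2
        obtain ⟨t, w, ht, hw, hmtw⟩ := hdecomp m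
        obtain ⟨j, hj⟩ := htors t ht
        -- find w' ∈ range φ₁ with X^n • w' = w
        have key : ∀ (n : ℕ), ∀ w ∈ LinearMap.range φ₁,
            ∃ w' ∈ LinearMap.range φ₁, ((X : R) ^ n) • w' = w := by
          intro n
          induction n with
          | zero => intro w hw; exact ⟨w, hw, by simp⟩
          | succ n ih =>
            intro w hw
            obtain ⟨w'', hw'', hww⟩ := ih w hw
            obtain ⟨w', hw', hww'⟩ := hsurjW w'' hw''
            refine ⟨w', hw', ?_⟩
            rw [pow_succ, mul_smul, hXW _ hw', hww', hww]
        obtain ⟨w', hw', hww⟩ := key n w hw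
        refine ⟨⟨w', hw'⟩, ?_⟩
        show f w' = LocalizedModule.mk m s
        have hfw : f w' = LocalizedModule.mk w' (1 : S) := rfl
        rw [hfw]
        refine LocalizedModule.mk_eq.mpr ⟨⟨X ^ j, ⟨j, rfl⟩⟩, ?_⟩
        simp only [Submonoid.smul_def, one_smul]
        have hsn' : (X : R) ^ n = (s : R) := hsn
        rw [← hsn', hww, hmtw, smul_add, hj, zero_add]
    set eq := LinearEquiv.ofBijective e ⟨heinj, hesurj⟩ with heq
    refine ⟨W.subtype ∘ₗ eq.symm.toLinearMap, ?_⟩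
    ext u
    show (f ∘ₗ (W.subtype ∘ₗ eq.symm.toLinearMap)) u = LinearMap.id u
    have h1 : eq (eq.symm u) = u := eq.apply_symm_apply u
    exact h1
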